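/- Let B be a σ-rigid ring (σ an endomorphism with a·σ(a) = 0 ⟹ a = 0). Then B is (σ,δ)-compatible for any σ-derivation δ: for all a, b ∈ B, ab = 0 iff a·σ(b) = 0, and ab = 0 implies a·δ(b) = 0. -/

import Mathlib

theorem rigid_is_compatible (B : Type*) [Ring B] (σ : B →+* B)
    (hrigid : ∀ a : B, a * σ a = 0 → a = 0) :
    ∀ δ : B → B, (∀ x y : B, δ (x + y) = δ x + δ y) →
      (∀ x y : B, δ (x * y) = σ x * δ y + δ x * y) →
      ∀ a b : B, (a * b = 0 ↔ a * σ b = 0) ∧ (a * b = 0 → a * δ b = 0) := by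
  -- reduced
  have red : ∀ a : B, a * a = 0 → a = 0 := by
    intro a h
    apply hrigid
    apply hrigid
    have : (a * σ a) * σ (a * σ a) = a * σ (a * a) * σ (σ a) := by
      simp only [map_mul, mul_assoc]
    rw [this, h, map_zero, mul_zero, zero_mul]
  have comm : ∀ a b : B, a * b = 0 → b * a = 0 := by
    intro a b h
    apply red
    have : b * a * (b * a) = b * (a * b) * a := by noncomm_ring
    rw [this, h, mul_zero, zero_mul]
  have fwd : ∀ a b : B, a * b = 0 → a * σ b = 0 := by
    intro a b h
    apply hrigid
    have : (a * σ b) * σ (a * σ b) = a * σ (b * a) * σ (σ b) := by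
      simp only [map_mul, mul_assoc]
    rw [this, comm a b h, map_zero, mul_zero, zero_mul]
  have bwd : ∀ a b : B, a * σ b = 0 → a * b = 0 := by
    intro a b h
    apply comm
    apply hrigid
    have : (b * a) * σ (b * a) = b * (a * σ b) * σ a := by
      simp only [map_mul, mul_assoc]
    rw [this, h, mul_zero, zero_mul]
  intro δ hadd hmul a b
  refine ⟨⟨fwd a b, bwd a b⟩, ?_⟩
  intro h
  have hδ0 : δ 0 = 0 := by
    have h0 : δ 0 = δ 0 + δ 0 := by simpa using hadd 0 0
    exact left_eq_add.mp h0
  have heq : σ a * δ b + δ a * b = 0 := by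
    rw [← hmul, h, hδ0]
  have hba : b * a = 0 := comm a b h
  have h1 : b * (σ a * δ b) + b * (δ a * b) = 0 := by
    rw [← mul_add, heq, mul_zero]
  have h2 : b * (σ a * δ b) = 0 := by
    rw [← mul_assoc, fwd b a hba, zero_mul]
  have h3 : b * (δ a * b) = 0 := by rwa [h2, zero_add] at h1
  have h4 : b * δ a = 0 := by
    apply red
    have : b * δ a * (b * δ a) = b * (δ a * b) * δ a := by noncomm_ring
    rw [this, h3, zero_mul]
  have h5 : δ a * b = 0 := comm b (δ a) h4
  have h6 : σ a * δ b = 0 := by rwa [h5, add_zero] at heq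
  have h7 : δ b * σ a = 0 := comm (σ a) (δ b) h6
  have h8 : δ b * a = 0 := bwd (δ b) a h7
  exact comm (δ b) a h8
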